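/- arXiv:1506.05576 — 2 statements merged into one kernel-verified Lean document; each statement's English description precedes it below -/
import Mathlib

section
/- Let f : ℝ^d → ℝ be C¹ and bounded above with m := sup f. For each n ≥ 1 set g_n(x) := f(x) − |x|²/n. Then g_n attains its maximum at some point x_n, and as n → ∞: f(x_n) → m, |x_n|²/n → 0, and (1 + |x_n|)·|∇f(x_n)| → 0. -/
open Filter Topology Set

lemma aux_grad {d : ℕ} (f : EuclideanSpace ℝ (Fin d) → ℝ)
    (hf : ContDiff ℝ 1 f) {n : ℕ} (hn : 1 ≤ n) {z : EuclideanSpace ℝ (Fin d)}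
    (hz : ∀ y, f y - ‖y‖^2 / n ≤ f z - ‖z‖^2 / n) :
    gradient f z = ((2:ℝ)/n) • z := by
  have hfd : DifferentiableAt ℝ f z := (hf.differentiable one_ne_zero) z
  have hmax : IsLocalMax (fun y => f y - ‖y‖^2 / n) z :=
    Filter.Eventually.of_forall hz
  have h1 : HasFDerivAt (fun y : EuclideanSpace ℝ (Fin d) => ‖y‖^2 / (n:ℝ))
      ((n:ℝ)⁻¹ • (2 • innerSL ℝ z)) z := by
    have := (hasStrictFDerivAt_norm_sq z).hasFDerivAt.const_smul (n:ℝ)⁻¹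
    simpa [div_eq_inv_mul, Pi.smul_def, smul_eq_mul] using this
  have h2 : HasFDerivAt (fun y => f y - ‖y‖^2 / n)
      (fderiv ℝ f z - (n:ℝ)⁻¹ • (2 • innerSL ℝ z)) z := hfd.hasFDerivAt.sub h1
  have h3 := hmax.hasFDerivAt_eq_zero h2
  have h4 : fderiv ℝ f z = (n:ℝ)⁻¹ • (2 • innerSL ℝ z) := by
    have := sub_eq_zero.mp h3
    exact this
  have hgdef : gradient f z
      = (InnerProductSpace.toDual ℝ (EuclideanSpace ℝ (Fin d))).symm (fderiv ℝ f z) := rfl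
  have h6 : (n:ℝ)⁻¹ • 2 • innerSL ℝ z
      = InnerProductSpace.toDual ℝ (EuclideanSpace ℝ (Fin d)) (((2:ℝ)/n) • z) := by
    ext y
    simp [InnerProductSpace.toDual_apply_apply, real_inner_smul_left, div_eq_inv_mul]
    ring
  rw [hgdef, h4, h6, LinearIsometryEquiv.symm_apply_apply]

/-- If `f : ℝ^d → ℝ` is `C¹` and bounded above with `m = sup f`, then for each `n ≥ 1` the
penalized function `g_n(x) = f(x) − |x|²/n` attains its maximum at some `x_n`, and
`f(x_n) → m`, `|x_n|²/n → 0`, and `(1+|x_n|)·|∇f(x_n)| → 0` as `n → ∞`. -/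
theorem stmt10 {d : ℕ} (f : EuclideanSpace ℝ (Fin d) → ℝ)
    (hf : ContDiff ℝ 1 f) (hbd : BddAbove (Set.range f)) :
    ∃ x : ℕ → EuclideanSpace ℝ (Fin d),
      (∀ n : ℕ, 1 ≤ n → ∀ y, f y - ‖y‖^2 / n ≤ f (x n) - ‖x n‖^2 / n) ∧
      Tendsto (fun n => f (x n)) atTop (nhds (sSup (Set.range f))) ∧
      Tendsto (fun n => ‖x n‖^2 / n) atTop (nhds 0) ∧
      Tendsto (fun n => (1 + ‖x n‖) * ‖gradient f (x n)‖) atTop (nhds 0) := by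
  obtain ⟨M, hM⟩ := hbd
  have hMb : ∀ y, f y ≤ M := fun y => hM ⟨y, rfl⟩
  have hcont : Continuous f := hf.continuous
  -- existence of maximizers
  have key : ∀ n : ℕ, 1 ≤ n → ∃ z, ∀ y, f y - ‖y‖^2 / n ≤ f z - ‖z‖^2 / n := by
    intro n hn
    apply Continuous.exists_forall_ge
    · exact hcont.sub ((continuous_norm.pow 2).div_const _)
    · have hnpos : (0:ℝ) < n := by exact_mod_cast hn
      have h1 : Tendsto (fun y : EuclideanSpace ℝ (Fin d) => ‖y‖^2 / n)
          (cocompact _) atTop := by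
        apply Tendsto.atTop_div_const hnpos
        exact (tendsto_pow_atTop two_ne_zero).comp tendsto_norm_cocompact_atTop
      have h2 : Tendsto (fun y : EuclideanSpace ℝ (Fin d) => M - ‖y‖^2 / n)
          (cocompact _) atBot := by
        have := tendsto_atBot_add_const_left _ M (tendsto_neg_atTop_atBot.comp h1)
        simpa [sub_eq_add_neg, Function.comp_def] using this
      exact tendsto_atBot_mono (fun y => sub_le_sub_right (hMb y) _) h2
  choose! x hx using key
  refine ⟨x, hx, ?_⟩
  set m := sSup (Set.range f) with hm
  have hne : (Set.range f).Nonempty := ⟨f 0, 0, rfl⟩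
  have hbd' : BddAbove (Set.range f) := ⟨M, hM⟩
  have hle : ∀ n, f (x n) ≤ m := fun n => le_csSup hbd' ⟨x n, rfl⟩
  set a : ℕ → ℝ := fun n => f (x n) - ‖x n‖^2 / n with ha
  have haf : ∀ n, a n ≤ f (x n) := by
    intro n
    have : (0:ℝ) ≤ ‖x n‖^2 / n := div_nonneg (by positivity) (Nat.cast_nonneg n)
    simp only [ha]; linarith
  -- a n → m
  have hA : Tendsto a atTop (𝓝 m) := by
    rw [Metric.tendsto_atTop]
    intro ε hε
    obtain ⟨v, ⟨y, rfl⟩, hy⟩ := exists_lt_of_lt_csSup hne (by linarith : m - ε/2 < m)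
    obtain ⟨N, hN⟩ := exists_nat_gt (max 1 (2 * ‖y‖^2 / ε))
    refine ⟨N, fun n hn => ?_⟩
    have hN1 : 1 ≤ N := by
      have := le_of_lt (lt_of_le_of_lt (le_max_left 1 (2*‖y‖^2/ε)) hN)
      exact_mod_cast Nat.one_le_cast.mp (by exact_mod_cast this)
    have hn1 : 1 ≤ n := le_trans hN1 hn
    have hnpos : (0:ℝ) < n := by exact_mod_cast hn1
    have hyn : ‖y‖^2 / n < ε/2 := by
      have hNn : (2 * ‖y‖^2 / ε) < n := lt_of_lt_of_le
        (lt_of_le_of_lt (le_max_right 1 _) hN) (by exact_mod_cast hn)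
      rw [div_lt_iff₀ hnpos]
      rw [div_lt_iff₀ hε] at hNn
      nlinarith [sq_nonneg ‖y‖]
    have hlow : m - ε < a n := by
      have := hx n hn1 y
      simp only [ha]
      nlinarith
    have hup : a n ≤ m := le_trans (haf n) (hle n)
    rw [Real.dist_eq, abs_sub_lt_iff]
    constructor <;> linarith
  -- f (x n) → m
  have hF : Tendsto (fun n => f (x n)) atTop (𝓝 m) :=
    tendsto_of_tendsto_of_tendsto_of_le_of_le hA tendsto_const_nhds
      haf hle
  -- ‖x n‖²/n → 0
  have hX : Tendsto (fun n => ‖x n‖^2 / n) atTop (𝓝 0) := by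
    have := hF.sub hA
    simp only [ha, sub_sub_cancel, sub_self] at this
    exact this
  refine ⟨hF, hX, ?_⟩
  -- ‖x n‖ / n → 0
  have hXn : Tendsto (fun n => ‖x n‖ / n) atTop (𝓝 0) := by
    have hsq : Tendsto (fun n => (‖x n‖ / n)^2) atTop (𝓝 0) := by
      apply squeeze_zero (fun n => by positivity)
      · intro n
        show (‖x n‖ / n)^2 ≤ ‖x n‖^2 / n
        rcases Nat.eq_zero_or_pos n with h | h
        · simp [h]
        · have hn1 : (1:ℝ) ≤ n := by exact_mod_cast h
          rw [div_pow]
          apply div_le_div_of_nonneg_left (by positivity) (by linarith)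
          nlinarith
      · exact hX
    have := (Real.continuous_sqrt.tendsto 0).comp hsq
    simp only [Function.comp_def, Real.sqrt_zero] at this
    exact this.congr fun n => Real.sqrt_sq (by positivity)
  -- final limit
  have hfin : Tendsto (fun n => 2 * (‖x n‖ / n) + 2 * (‖x n‖^2 / n)) atTop (𝓝 0) := by
    have := (hXn.const_mul 2).add (hX.const_mul 2)
    simpa using this
  apply hfin.congr'
  filter_upwards [eventually_ge_atTop 1] with n hn1
  have hnpos : (0:ℝ) < n := by exact_mod_cast hn1
  rw [aux_grad f hf hn1 (hx n hn1)]
  rw [norm_smul]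
  have : ‖(2:ℝ)/n‖ = 2/n := by
    rw [Real.norm_eq_abs, abs_of_pos (by positivity)]
  rw [this]
  field_simp
end

section
/- Let A* be the operator A*φ(x) = b(x)·∇φ(x) + (1/2)·tr(a(x)∇²φ(x)) where b : ℝ^d → ℝ^d and σ : ℝ^d → ℝ^{d×n} are globally Lipschitz (so |b(x)| ≤ K(1+|x|) and ‖σ(x)‖ ≤ K(1+|x|)), and a = σσᵀ. If f ∈ C²(ℝ^d) is bounded, then for every λ > 0, λ·sup f ≤ sup (λf − A*f). -/
open Filter Topology

set_option maxHeartbeats 1000000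

lemma aux_localmax_second (φ φ' : ℝ → ℝ) (L : ℝ)
    (h1 : ∀ t, HasDerivAt φ (φ' t) t)
    (h2 : HasDerivAt φ' L 0)
    (h3 : IsLocalMax φ 0) : φ' 0 = 0 ∧ L ≤ 0 := by
  have hd0 : φ' 0 = 0 := by
    have := h3.deriv_eq_zero
    rwa [(h1 0).deriv] at this
  refine ⟨hd0, ?_⟩
  by_contra hL
  push_neg at hL
  have hs : Tendsto (fun t => φ' t / t) (𝓝[≠] (0:ℝ)) (𝓝 L) := by
    have := hasDerivAt_iff_tendsto_slope.1 h2
    have heq : slope φ' 0 = fun t => φ' t / t := by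
      funext t; simp [slope_def_field, hd0]
    rwa [heq] at this
  have hev : ∀ᶠ t in 𝓝[≠] (0:ℝ), L/2 < φ' t / t :=
    hs.eventually (eventually_gt_nhds (by linarith))
  rw [eventually_nhdsWithin_iff, Metric.eventually_nhds_iff] at hev
  obtain ⟨δ, hδ, hev⟩ := hev
  have hpos : ∀ t ∈ Set.Ioo (0:ℝ) δ, 0 < φ' t := by
    intro t ht
    have h := hev (y := t) (by simpa [Real.dist_eq, abs_of_pos ht.1] using ht.2)
      (by simp [ne_of_gt ht.1])
    have : 0 < φ' t / t := lt_trans (by positivity) h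
    exact (div_pos_iff.1 this).resolve_right (fun h => absurd ht.1 (not_lt.2 h.2.le)) |>.1
  have hmono : StrictMonoOn φ (Set.Icc 0 δ) := by
    apply strictMonoOn_of_deriv_pos (convex_Icc _ _)
    · exact fun t _ => ((h1 t).differentiableAt.continuousAt).continuousWithinAt
    · intro t ht
      rw [interior_Icc] at ht
      rw [(h1 t).deriv]
      exact hpos t ht
  obtain ⟨δ', hδ', hm⟩ := Metric.eventually_nhds_iff.1 h3
  set t : ℝ := min δ δ' / 2 with ht
  have htpos : 0 < t := by positivity
  have h1' : φ 0 < φ t := hmono ⟨le_rfl, hδ.le⟩ ⟨htpos.le, by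
    calc t ≤ δ / 2 := by
          apply div_le_div_of_nonneg_right (min_le_left _ _); norm_num
    _ ≤ δ := by linarith⟩ htpos
  have h2' : φ t ≤ φ 0 := hm (y := t) (by
    rw [Real.dist_eq, sub_zero, abs_of_pos htpos]
    calc t ≤ δ' / 2 := by
          apply div_le_div_of_nonneg_right (min_le_right _ _); norm_num
    _ < δ' := by linarith)
  linarith

lemma aux_psi (α β γ : ℝ) (hp : ∀ t, 0 < α + β*t + γ*t^2) :
    (∀ t, HasDerivAt (fun s => Real.log (α + β*s + γ*s^2)) ((β + 2*γ*t)/(α + β*t + γ*t^2)) t) ∧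
    HasDerivAt (fun t => (β + 2*γ*t)/(α + β*t + γ*t^2)) ((2*γ*α - β^2)/α^2) 0 := by
  have hpd : ∀ t : ℝ, HasDerivAt (fun s => α + β*s + γ*s^2) (β + 2*γ*t) t := by
    intro t
    have : HasDerivAt (fun s : ℝ => α + β*s + γ*s^2) (0 + β*1 + γ*(2*t)) t := by
      apply HasDerivAt.add
      apply HasDerivAt.add (hasDerivAt_const _ _)
      · exact (hasDerivAt_id t).const_mul β
      · simpa using ((hasDerivAt_pow 2 t)).const_mul γ
    convert this using 1; ring
  constructor
  · intro t
    refine ((Real.hasDerivAt_log (ne_of_gt (hp t))).comp t (hpd t)).congr_deriv ?_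
    ring
  · have h1 : HasDerivAt (fun t : ℝ => β + 2*γ*t) (2*γ) 0 := by
      simpa using ((hasDerivAt_id (0:ℝ)).const_mul (2*γ)).const_add β
    have := h1.div (hpd 0) (ne_of_gt (hp 0))
    refine this.congr_deriv ?_
    ring

lemma aux_clm {d : ℕ} (T : (Fin d → ℝ) →L[ℝ] ℝ) (v : Fin d → ℝ) :
    T v = ∑ j, v j * T (Pi.single j 1) := by
  conv_lhs => rw [← Finset.univ_sum_single v, map_sum]
  congr 1; funext j
  have : (v j) • (Pi.single j (1:ℝ) : Fin d → ℝ) = Pi.single j (v j) := by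
    rw [← Pi.single_smul, smul_eq_mul, mul_one]
  rw [← this, map_smul]; rfl

lemma aux_line_hasderiv {d : ℕ} (x v : Fin d → ℝ) (t : ℝ) :
    HasDerivAt (fun s : ℝ => x + s • v) v t := by
  simpa using ((hasDerivAt_id t).smul_const v).const_add x

lemma aux_line1 {d : ℕ} (f : (Fin d → ℝ) → ℝ) (hf : ContDiff ℝ 2 f) (x v : Fin d → ℝ) (t : ℝ) :
    HasDerivAt (fun s => f (x + s • v)) (fderiv ℝ f (x + t • v) v) t := by
  have hd : DifferentiableAt ℝ f (x + t • v) :=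
    (hf.differentiable (by norm_num)) _
  exact hd.hasFDerivAt.comp_hasDerivAt t (aux_line_hasderiv x v t)

lemma aux_Dj_contdiff {d : ℕ} (f : (Fin d → ℝ) → ℝ) (hf : ContDiff ℝ 2 f) (w : Fin d → ℝ) :
    ContDiff ℝ 1 (fun y => fderiv ℝ f y w) := by
  have h1 : ContDiff ℝ 1 (fderiv ℝ f) := hf.fderiv_right (m := 1) (by norm_num)
  exact h1.clm_apply contDiff_const

lemma aux_line2 {d : ℕ} (f : (Fin d → ℝ) → ℝ) (hf : ContDiff ℝ 2 f) (x v : Fin d → ℝ) :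
    HasDerivAt (fun s : ℝ => fderiv ℝ f (x + s • v) v)
      (∑ j, v j * ∑ i, v i *
        fderiv ℝ (fun y => fderiv ℝ f y (Pi.single j 1)) x (Pi.single i 1)) (0:ℝ) := by
  have heq : (fun s : ℝ => fderiv ℝ f (x + s • v) v)
      = fun s : ℝ => ∑ j, v j * fderiv ℝ f (x + s • v) (Pi.single j 1) := by
    funext s; exact aux_clm _ v
  rw [heq]
  apply HasDerivAt.fun_sum
  intro j _
  have hDj : ∀ w, HasDerivAt (fun s : ℝ => fderiv ℝ f (x + s • v) w)
      (fderiv ℝ (fun y => fderiv ℝ f y w) x v) (0:ℝ) := by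
    intro w
    have hdiff : DifferentiableAt ℝ (fun y => fderiv ℝ f y w) x :=
      ((aux_Dj_contdiff f hf w).differentiable (by norm_num)) x
    have hx : x + (0:ℝ) • v = x := by simp
    have h2 := hdiff.hasFDerivAt
    rw [← hx] at h2
    have := h2.comp_hasDerivAt 0 (aux_line_hasderiv x v 0)
    simpa [hx, Function.comp_def] using this
  have := (hDj (Pi.single j 1)).const_mul (v j)
  refine this.congr_deriv ?_
  rw [aux_clm (fderiv ℝ (fun y => fderiv ℝ f y (Pi.single j 1)) x) v]

lemma aux_norm_sq {d : ℕ} (x : Fin d → ℝ) : ‖x‖^2 ≤ ∑ i, (x i)^2 := by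
  rcases isEmpty_or_nonempty (Fin d) with hd | hd
  · have : x = 0 := funext (fun i => absurd (IsEmpty.false i) not_false)
    simp [this]
  · obtain ⟨i, hi⟩ := Finite.exists_max (fun i => |x i|)
    have hxi : ‖x‖ ≤ |x i| := (pi_norm_le_iff_of_nonneg (abs_nonneg _)).2 (fun j => hi j)
    calc ‖x‖^2 ≤ |x i|^2 := by nlinarith [norm_nonneg x]
    _ = (x i)^2 := sq_abs _
    _ ≤ ∑ j, (x j)^2 := Finset.single_le_sum (f := fun j => (x j)^2)
        (fun j _ => sq_nonneg _) (Finset.mem_univ i)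

lemma aux_max {d : ℕ} (f : (Fin d → ℝ) → ℝ) (hfc : Continuous f)
    (M : ℝ) (hM : ∀ x, |f x| ≤ M) (ε : ℝ) (hε : 0 < ε) :
    ∃ x₀, ∀ x, f x - ε * Real.log (1 + ∑ i, (x i)^2) ≤
      f x₀ - ε * Real.log (1 + ∑ i, (x₀ i)^2) := by
  set q : (Fin d → ℝ) → ℝ := fun x => ∑ i, (x i)^2 with hq
  have hq0 : ∀ x, 0 ≤ q x := fun x => Finset.sum_nonneg (fun i _ => sq_nonneg _)
  have hqc : Continuous q := continuous_finset_sum _ (fun i _ => (continuous_apply i).pow 2)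
  set F : (Fin d → ℝ) → ℝ := fun x => f x - ε * Real.log (1 + q x) with hF
  have hFc : Continuous F := hfc.sub (continuous_const.mul
    ((continuous_const.add hqc).log (fun x => ne_of_gt (by show 0 < 1 + q x; linarith [hq0 x]))))
  have hM0 : 0 ≤ M := le_trans (abs_nonneg _) (hM 0)
  set R : ℝ := Real.exp (2*M/ε + 1) with hR
  have hR1 : 1 ≤ R := by
    rw [hR, ← Real.exp_zero]
    apply Real.exp_le_exp.2; positivity
  have hcb : IsCompact (Metric.closedBall (0 : Fin d → ℝ) R) := isCompact_closedBall _ _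
  obtain ⟨x₀, hx₀mem, hx₀⟩ := hcb.exists_isMaxOn
    ⟨0, Metric.mem_closedBall_self (by linarith)⟩ hFc.continuousOn
  refine ⟨x₀, fun x => ?_⟩
  by_cases hx : x ∈ Metric.closedBall (0 : Fin d → ℝ) R
  · exact hx₀ hx
  · have hxn : R < ‖x‖ := by
      simpa [Real.dist_eq] using Metric.mem_closedBall.not.1 hx
    have hqx : R^2 ≤ q x := by
      calc R^2 ≤ ‖x‖^2 := by nlinarith
      _ ≤ q x := aux_norm_sq x
    have hlog : 2*M/ε + 1 ≤ Real.log (1 + q x) := by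
      calc 2*M/ε + 1 = Real.log R := (Real.log_exp _).symm
      _ ≤ Real.log (1 + q x) := Real.log_le_log (by positivity) (by nlinarith)
    have h1 : F x ≤ M - ε * (2*M/ε + 1) := by
      have := (abs_le.1 (hM x)).2
      have h2 : ε * (2*M/ε + 1) ≤ ε * Real.log (1 + q x) :=
        mul_le_mul_of_nonneg_left hlog hε.le
      simp only [hF]; linarith
    have h2 : ε * (2*M/ε + 1) = 2*M + ε := by field_simp
    have hF0 : -M ≤ F 0 := by
      have := (abs_le.1 (hM 0)).1
      have hq00 : q 0 = 0 := by simp [hq]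
      simp only [hF, hq00]
      simp [Real.log_one]; linarith
    have := hx₀ (Metric.mem_closedBall_self (by linarith))
    calc F x ≤ M - (2*M + ε) := by rw [← h2]; linarith
    _ ≤ -M := by linarith
    _ ≤ F 0 := hF0
    _ ≤ F x₀ := this

lemma aux_keypoint {d : ℕ} (f : (Fin d → ℝ) → ℝ) (hf : ContDiff ℝ 2 f)
    (M : ℝ) (hM : ∀ x, |f x| ≤ M) (ε : ℝ) (hε : 0 < ε) :
    ∃ x₀ : Fin d → ℝ,
      (∀ y, f y ≤ f x₀ + ε * Real.log (1 + ∑ i, (y i)^2)) ∧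
      (∀ v, fderiv ℝ f x₀ v = ε * (2 * ∑ i, x₀ i * v i) / (1 + ∑ i, (x₀ i)^2)) ∧
      (∀ v : Fin d → ℝ, ∑ j, v j * ∑ i, v i *
          fderiv ℝ (fun y => fderiv ℝ f y (Pi.single j 1)) x₀ (Pi.single i 1)
        ≤ 2 * ε * (∑ i, (v i)^2) / (1 + ∑ i, (x₀ i)^2)) := by
  obtain ⟨x₀, hmax⟩ := aux_max f hf.continuous M hM ε hε
  set a : ℝ := 1 + ∑ i, (x₀ i)^2 with ha
  have ha1 : 1 ≤ a := by
    have : (0:ℝ) ≤ ∑ i, (x₀ i)^2 := Finset.sum_nonneg (fun i _ => sq_nonneg _)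
    linarith
  have ha0 : 0 < a := by linarith
  have main : ∀ v : Fin d → ℝ,
      fderiv ℝ f x₀ v = ε * (2 * ∑ i, x₀ i * v i) / a ∧
      ∑ j, v j * ∑ i, v i *
          fderiv ℝ (fun y => fderiv ℝ f y (Pi.single j 1)) x₀ (Pi.single i 1)
        ≤ 2 * ε * (∑ i, (v i)^2) / a := by
    intro v
    set β : ℝ := 2 * ∑ i, x₀ i * v i with hβ
    set γ : ℝ := ∑ i, (v i)^2 with hγ
    have hquad : ∀ t : ℝ, 1 + ∑ i, ((x₀ + t • v) i)^2 = a + β*t + γ*t^2 := by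
      intro t
      have h1 : ∀ i, ((x₀ + t • v) i)^2 = (x₀ i)^2 + 2*(x₀ i * v i)*t + (v i)^2*t^2 := by
        intro i; simp [Pi.add_apply, Pi.smul_apply, smul_eq_mul]; ring
      simp only [h1, Finset.sum_add_distrib, ← Finset.sum_mul]
      rw [ha, hβ, hγ, ← Finset.mul_sum]
      ring
    have hp : ∀ t : ℝ, 0 < a + β*t + γ*t^2 := by
      intro t
      rw [← hquad t]
      have : (0:ℝ) ≤ ∑ i, ((x₀ + t • v) i)^2 := Finset.sum_nonneg (fun i _ => sq_nonneg _)
      linarith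
    obtain ⟨hψ1, hψ2⟩ := aux_psi a β γ hp
    set φ : ℝ → ℝ := fun t => f (x₀ + t • v) - ε * Real.log (a + β*t + γ*t^2) with hφ
    set φ' : ℝ → ℝ := fun t => fderiv ℝ f (x₀ + t • v) v
      - ε * ((β + 2*γ*t)/(a + β*t + γ*t^2)) with hφ'
    have h1 : ∀ t, HasDerivAt φ (φ' t) t :=
      fun t => (aux_line1 f hf x₀ v t).sub ((hψ1 t).const_mul ε)
    have h2 : HasDerivAt φ'
        ((∑ j, v j * ∑ i, v i *
          fderiv ℝ (fun y => fderiv ℝ f y (Pi.single j 1)) x₀ (Pi.single i 1))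
          - ε * ((2*γ*a - β^2)/a^2)) 0 :=
      (aux_line2 f hf x₀ v).sub (hψ2.const_mul ε)
    have h3 : IsLocalMax φ 0 := by
      apply Filter.Eventually.of_forall
      intro t
      have := hmax (x₀ + t • v)
      simp only [hφ]
      rw [← hquad t]
      have h0 : x₀ + (0:ℝ) • v = x₀ := by simp
      rw [show a + β*0 + γ*0^2 = 1 + ∑ i, (x₀ i)^2 by rw [ha]; ring, h0]
      exact this
    obtain ⟨hg0, hQ⟩ := aux_localmax_second φ φ' _ h1 h2 h3
    constructor
    · have h0 : x₀ + (0:ℝ) • v = x₀ := by simp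
      simp only [hφ', h0] at hg0
      have : fderiv ℝ f x₀ v = ε * ((β + 2*γ*0)/(a + β*0 + γ*0^2)) := by linarith
      rw [this, show a + β*0 + γ*0^2 = a by ring, show β + 2*γ*0 = β by ring, hβ]
      ring
    · have hstep : ε * ((2*γ*a - β^2)/a^2) ≤ 2 * ε * γ / a := by
        have h4 : (2*γ*a - β^2)/a^2 ≤ 2*γ/a := by
          rw [div_le_div_iff₀ (by positivity) ha0]
          nlinarith [sq_nonneg β, sq_nonneg a]
        calc ε * ((2*γ*a - β^2)/a^2) ≤ ε * (2*γ/a) := mul_le_mul_of_nonneg_left h4 hε.le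
        _ = 2 * ε * γ / a := by ring
      linarith
  refine ⟨x₀, fun y => ?_, fun v => (main v).1, fun v => (main v).2⟩
  have := hmax y
  have hla : 0 ≤ Real.log a := Real.log_nonneg ha1
  have h5 : ε * Real.log a ≥ 0 := by positivity
  linarith

lemma aux_rearrange {d n : ℕ} (s : Fin d → Fin n → ℝ) (H : Fin d → Fin d → ℝ) :
    ∑ i, ∑ j, (∑ k, s i k * s j k) * H i j
      = ∑ k, ∑ j, s j k * ∑ i, s i k * H i j := by
  simp_rw [Finset.sum_mul, Finset.mul_sum]
  rw [Finset.sum_comm]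
  rw [show (∑ j, ∑ i, ∑ k, s i k * s j k * H i j : ℝ)
      = ∑ j, ∑ k, ∑ i, s i k * s j k * H i j from
    Finset.sum_congr rfl (fun j _ => Finset.sum_comm)]
  rw [Finset.sum_comm]
  exact Finset.sum_congr rfl (fun k _ => Finset.sum_congr rfl (fun j _ =>
    Finset.sum_congr rfl (fun i _ => by ring)))

/-- Dissipativity of the generator `A*φ = b·∇φ + (1/2) tr(σσᵀ ∇²φ)` on bounded `C²`
functions: with `b`, `σ` globally Lipschitz (hence with linear growth `|b(x)| ≤ K(1+|x|)`,
`‖σ(x)‖ ≤ K(1+|x|)`), for every bounded `C²` function `f` and every `λ > 0` one has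
`λ · sup f ≤ sup (λ f − A*f)` (suprema taken in the extended reals). -/
theorem stmt11 {d n : ℕ} (K : NNReal)
    (b : (Fin d → ℝ) → (Fin d → ℝ)) (σ : (Fin d → ℝ) → (Fin d → Fin n → ℝ))
    (hbLip : LipschitzWith K b) (hσLip : LipschitzWith K σ)
    (hbgr : ∀ x, ‖b x‖ ≤ K * (1 + ‖x‖)) (hσgr : ∀ x, ‖σ x‖ ≤ K * (1 + ‖x‖))
    (f : (Fin d → ℝ) → ℝ) (hf : ContDiff ℝ 2 f) (hfb : ∃ M, ∀ x, |f x| ≤ M)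
    (lam : ℝ) (hlam : 0 < lam) :
    (lam : EReal) * (⨆ x, (f x : EReal)) ≤
      ⨆ x, ((lam * f x -
          (∑ i, b x i * fderiv ℝ f x (Pi.single i 1) +
            (1/2) * ∑ i, ∑ j, (∑ k, σ x i k * σ x j k) *
              fderiv ℝ (fun y => fderiv ℝ f y (Pi.single j 1)) x (Pi.single i 1)) : ℝ) :
        EReal) := by
  classical
  obtain ⟨M, hM⟩ := hfb
  have hKr : (0:ℝ) ≤ (K:ℝ) := K.coe_nonneg
  have hbdd : BddAbove (Set.range f) := ⟨M, by rintro _ ⟨x, rfl⟩; exact (abs_le.1 (hM x)).2⟩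
  set S : ℝ := ⨆ x, f x with hS
  have key : ∀ δ : ℝ, 0 < δ → ∃ x, lam * S - δ ≤ lam * f x -
      (∑ i, b x i * fderiv ℝ f x (Pi.single i 1) +
        (1/2) * ∑ i, ∑ j, (∑ k, σ x i k * σ x j k) *
          fderiv ℝ (fun y => fderiv ℝ f y (Pi.single j 1)) x (Pi.single i 1)) := by
    intro δ hδ
    obtain ⟨y, hy⟩ := exists_lt_of_lt_ciSup (show S - δ/(2*lam) < ⨆ x, f x by
      rw [← hS]
      have : 0 < δ/(2*lam) := by positivity
      linarith)
    have hCy0 : 0 ≤ Real.log (1 + ∑ i, (y i)^2) := Real.log_nonneg (by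
      have : (0:ℝ) ≤ ∑ i, (y i)^2 := Finset.sum_nonneg fun i _ => sq_nonneg _
      linarith)
    set C : ℝ := lam * Real.log (1 + ∑ i, (y i)^2)
      + 4*d*(K:ℝ) + 2*n*d*(K:ℝ)^2 + 1 with hCdef
    have hC : 0 < C := by positivity
    set ε : ℝ := δ / (2*C) with hεdef
    have hε0 : 0 < ε := by positivity
    obtain ⟨x₀, hk1, hk2, hk3⟩ := aux_keypoint f hf M hM ε hε0
    have haq : (0:ℝ) ≤ ∑ i, (x₀ i)^2 := Finset.sum_nonneg fun i _ => sq_nonneg _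
    set a : ℝ := 1 + ∑ i, (x₀ i)^2 with ha
    have ha0 : 0 < a := by rw [ha]; linarith
    have hr0 : (0:ℝ) ≤ ‖x₀‖ := norm_nonneg _
    have hr2 : ‖x₀‖^2 ≤ a - 1 := by
      rw [ha]; have := aux_norm_sq x₀; linarith
    have hr1 : 2*‖x₀‖ ≤ 1 + ‖x₀‖^2 := by nlinarith [sq_nonneg (‖x₀‖-1)]
    -- drift bound
    have hdrift : ∑ i, b x₀ i * fderiv ℝ f x₀ (Pi.single i 1) ≤ 4*d*(K:ℝ)*ε := by
      have h1 : ∑ i, b x₀ i * fderiv ℝ f x₀ (Pi.single i 1) = fderiv ℝ f x₀ (b x₀) :=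
        (aux_clm (fderiv ℝ f x₀) (b x₀)).symm
      rw [h1, hk2 (b x₀)]
      have hT : ∑ i, x₀ i * b x₀ i ≤ (d:ℝ) * ((K:ℝ) * (2*a)) := by
        calc ∑ i, x₀ i * b x₀ i ≤ ∑ _i : Fin d, ‖x₀‖ * ((K:ℝ)*(1+‖x₀‖)) := by
              apply Finset.sum_le_sum; intro i _
              have h2 : |x₀ i| ≤ ‖x₀‖ := by
                have := norm_le_pi_norm x₀ i; rwa [Real.norm_eq_abs] at this
              have h3 : |b x₀ i| ≤ (K:ℝ)*(1+‖x₀‖) := by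
                have := norm_le_pi_norm (b x₀) i
                rw [Real.norm_eq_abs] at this
                exact le_trans this (hbgr x₀)
              calc x₀ i * b x₀ i ≤ |x₀ i * b x₀ i| := le_abs_self _
              _ = |x₀ i| * |b x₀ i| := abs_mul _ _
              _ ≤ ‖x₀‖ * ((K:ℝ)*(1+‖x₀‖)) :=
                  mul_le_mul h2 h3 (abs_nonneg _) hr0
        _ = (d:ℝ) * (‖x₀‖ * ((K:ℝ)*(1+‖x₀‖))) := by
              rw [Finset.sum_const, Finset.card_univ, Fintype.card_fin, nsmul_eq_mul]
        _ ≤ (d:ℝ) * ((K:ℝ)*(2*a)) := by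
              apply mul_le_mul_of_nonneg_left _ (Nat.cast_nonneg d)
              nlinarith [hKr, hr1, hr2, hr0]
      rw [div_le_iff₀ ha0]
      nlinarith [mul_le_mul_of_nonneg_left hT (by positivity : (0:ℝ) ≤ 2*ε)]
    -- hessian bound
    have hhess : ∑ i, ∑ j, (∑ k, σ x₀ i k * σ x₀ j k) *
        fderiv ℝ (fun y => fderiv ℝ f y (Pi.single j 1)) x₀ (Pi.single i 1)
        ≤ (n:ℝ) * (4*d*(K:ℝ)^2*ε) := by
      rw [aux_rearrange]
      have hk : ∀ k : Fin n, ∑ j, σ x₀ j k * ∑ i, σ x₀ i k *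
          fderiv ℝ (fun y => fderiv ℝ f y (Pi.single j 1)) x₀ (Pi.single i 1)
          ≤ 4*d*(K:ℝ)^2*ε := by
        intro k
        have h4 := hk3 (fun i => σ x₀ i k)
        refine le_trans h4 ?_
        have hγ : ∑ i, (σ x₀ i k)^2 ≤ (d:ℝ) * ((K:ℝ)^2*(2*a)) := by
          calc ∑ i, (σ x₀ i k)^2 ≤ ∑ _i : Fin d, (K:ℝ)^2*(2*a) := by
                apply Finset.sum_le_sum; intro i _
                have h5 : |σ x₀ i k| ≤ (K:ℝ)*(1+‖x₀‖) := by
                  have ha' := norm_le_pi_norm (σ x₀ i) k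
                  have hb' := norm_le_pi_norm (σ x₀) i
                  rw [Real.norm_eq_abs] at ha'
                  exact le_trans (le_trans ha' hb') (hσgr x₀)
                nlinarith [sq_abs (σ x₀ i k), abs_nonneg (σ x₀ i k), hKr, hr0, hr1, hr2,
                  mul_self_le_mul_self (abs_nonneg (σ x₀ i k)) h5]
          _ = (d:ℝ) * ((K:ℝ)^2*(2*a)) := by
                rw [Finset.sum_const, Finset.card_univ, Fintype.card_fin, nsmul_eq_mul]
        rw [div_le_iff₀ ha0]
        nlinarith [mul_le_mul_of_nonneg_left hγ (by positivity : (0:ℝ) ≤ 2*ε)]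
      calc ∑ k, ∑ j, σ x₀ j k * ∑ i, σ x₀ i k *
            fderiv ℝ (fun y => fderiv ℝ f y (Pi.single j 1)) x₀ (Pi.single i 1)
          ≤ ∑ _k : Fin n, 4*d*(K:ℝ)^2*ε := Finset.sum_le_sum (fun k _ => hk k)
      _ = (n:ℝ) * (4*d*(K:ℝ)^2*ε) := by
            rw [Finset.sum_const, Finset.card_univ, Fintype.card_fin, nsmul_eq_mul]
    -- lower bound on f x₀
    have hf0 : S - δ/(2*lam) - ε*Real.log (1 + ∑ i, (y i)^2) ≤ f x₀ := by
      have := hk1 y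
      linarith [hy.le]
    refine ⟨x₀, ?_⟩
    have hlf : lam * (S - δ/(2*lam) - ε*Real.log (1 + ∑ i, (y i)^2)) ≤ lam * f x₀ :=
      mul_le_mul_of_nonneg_left hf0 hlam.le
    have e1 : lam * (S - δ/(2*lam) - ε*Real.log (1 + ∑ i, (y i)^2))
        = lam*S - δ/2 - lam*(ε*Real.log (1 + ∑ i, (y i)^2)) := by
      field_simp
    have h7 : ε * C = δ/2 := by
      rw [hεdef]; field_simp
    have e2 : lam*(ε*Real.log (1 + ∑ i, (y i)^2)) + 4*d*(K:ℝ)*ε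
        + (1/2)*((n:ℝ)*(4*d*(K:ℝ)^2*ε)) ≤ δ/2 := by
      have heq : lam*(ε*Real.log (1 + ∑ i, (y i)^2)) + 4*d*(K:ℝ)*ε
          + (1/2)*((n:ℝ)*(4*d*(K:ℝ)^2*ε)) = ε*C - ε := by
        rw [hCdef]; ring
      rw [heq]
      linarith
    have h8 : (1/2) * (∑ i, ∑ j, (∑ k, σ x₀ i k * σ x₀ j k) *
        fderiv ℝ (fun y => fderiv ℝ f y (Pi.single j 1)) x₀ (Pi.single i 1))
        ≤ (1/2)*((n:ℝ)*(4*d*(K:ℝ)^2*ε)) := by linarith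
    rw [e1] at hlf
    linarith
  -- conclude in EReal
  have hSle : (⨆ x, (f x : EReal)) ≤ ((S:ℝ) : EReal) := by
    apply iSup_le
    intro x
    exact_mod_cast le_ciSup hbdd x
  have hL : (lam : EReal) * (⨆ x, (f x : EReal)) ≤ ((lam * S : ℝ) : EReal) := by
    rw [EReal.coe_mul]
    exact mul_le_mul_of_nonneg_left hSle (by exact_mod_cast hlam.le)
  refine hL.trans ?_
  apply le_of_forall_lt
  intro c hc
  obtain ⟨rr, hcr, hrr⟩ := EReal.lt_iff_exists_real_btwn.1 hc
  have hδ : 0 < lam * S - rr := by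
    have := EReal.coe_lt_coe_iff.1 hrr
    linarith
  obtain ⟨x, hx⟩ := key (lam*S - rr) hδ
  calc c < (rr:EReal) := hcr
  _ ≤ _ := EReal.coe_le_coe_iff.2 (by linarith : rr ≤ lam * f x -
      (∑ i, b x i * fderiv ℝ f x (Pi.single i 1) +
        (1/2) * ∑ i, ∑ j, (∑ k, σ x i k * σ x j k) *
          fderiv ℝ (fun y => fderiv ℝ f y (Pi.single j 1)) x (Pi.single i 1)))
  _ ≤ _ := le_iSup (fun z => ((lam * f z -
      (∑ i, b z i * fderiv ℝ f z (Pi.single i 1) +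
        (1/2) * ∑ i, ∑ j, (∑ k, σ z i k * σ z j k) *
          fderiv ℝ (fun y => fderiv ℝ f y (Pi.single j 1)) z (Pi.single i 1)) : ℝ) : EReal)) x
end
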